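/- Let a be symmetric positive definite, A skew-symmetric, both d×d real, and let V ∈ ℝ^{d×m} have linearly independent columns. Then Π := Vᵀ(a − A)⁻¹V is invertible, and its symmetric part ½(Π + Πᵀ) = Vᵀ(a−A)⁻¹ a (a+A)⁻¹ V is positive definite. -/

import Mathlib

open Matrix

private lemma quad_eq {d m : ℕ} (M : Matrix (Fin d) (Fin d) ℝ)
    (B : Matrix (Fin d) (Fin m) ℝ) (x : Fin m → ℝ) :
    x ⬝ᵥ ((Bᵀ * M * B) *ᵥ x) = (B *ᵥ x) ⬝ᵥ (M *ᵥ (B *ᵥ x)) := by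
  rw [← mulVec_mulVec, ← mulVec_mulVec, dotProduct_mulVec x Bᵀ, vecMul_transpose]

private lemma sandwich_posDef {d m : ℕ} {M : Matrix (Fin d) (Fin d) ℝ}
    {B : Matrix (Fin d) (Fin m) ℝ} (hM : M.PosDef) (hB : Function.Injective B.mulVec) :
    (Bᵀ * M * B).PosDef := by
  refine PosDef.of_dotProduct_mulVec_pos ?_ ?_
  · have := isHermitian_conjTranspose_mul_mul B hM.1
    rwa [conjTranspose_eq_transpose_of_trivial] at this
  · intro x hx
    have hBx : B *ᵥ x ≠ 0 := by
      intro h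
      exact hx (hB (by rw [h, mulVec_zero]))
    have := hM.dotProduct_mulVec_pos hBx
    rw [star_trivial] at this
    rw [star_trivial, quad_eq]
    exact this

/-- `Π := Vᵀ(a - A)⁻¹V` is invertible and its symmetric part
`½(Π + Πᵀ) = Vᵀ(a-A)⁻¹ a (a+A)⁻¹ V` is positive definite. -/
theorem stmt4 {d m : ℕ} (a A : Matrix (Fin d) (Fin d) ℝ) (V : Matrix (Fin d) (Fin m) ℝ)
    (ha : a.PosDef) (hA : Aᵀ = -A) (hV : Function.Injective V.mulVec) :
    IsUnit (Vᵀ * (a - A)⁻¹ * V) ∧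
      (1 / 2 : ℝ) • (Vᵀ * (a - A)⁻¹ * V + (Vᵀ * (a - A)⁻¹ * V)ᵀ)
        = Vᵀ * (a - A)⁻¹ * a * (a + A)⁻¹ * V ∧
      (Vᵀ * (a - A)⁻¹ * a * (a + A)⁻¹ * V).PosDef := by
  have haT : aᵀ = a := by
    have := ha.1.eq
    rwa [conjTranspose_eq_transpose_of_trivial] at this
  have hskew : ∀ x : Fin d → ℝ, x ⬝ᵥ (A *ᵥ x) = 0 := by
    intro x
    have h1 : x ⬝ᵥ (A *ᵥ x) = (Aᵀ *ᵥ x) ⬝ᵥ x := by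
      rw [dotProduct_mulVec, ← vecMul_transpose, transpose_transpose]
    have h2 : x ⬝ᵥ (A *ᵥ x) = -(x ⬝ᵥ (A *ᵥ x)) := by
      conv_lhs => rw [h1, hA]
      rw [neg_mulVec, neg_dotProduct, dotProduct_comm]
    linarith
  have hquad : ∀ x : Fin d → ℝ, x ≠ 0 → 0 < x ⬝ᵥ ((a - A) *ᵥ x) := by
    intro x hx
    have := ha.dotProduct_mulVec_pos hx
    rw [star_trivial] at this
    rw [sub_mulVec, dotProduct_sub, hskew, sub_zero]
    exact this
  have hker : ∀ x : Fin d → ℝ, (a - A) *ᵥ x = 0 → x = 0 := by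
    intro x hx
    by_contra h
    have := hquad x h
    rw [hx, dotProduct_zero] at this
    exact lt_irrefl 0 this
  have hUnit : IsUnit (a - A) := by
    rw [← Matrix.mulVec_injective_iff_isUnit]
    intro x y hxy
    have h0 : (a - A) *ᵥ (x - y) = 0 := by rw [mulVec_sub, hxy, sub_self]
    exact sub_eq_zero.mp (hker _ h0)
  have hT : (a - A)ᵀ = a + A := by rw [transpose_sub, haT, hA, sub_neg_eq_add]
  have hT' : (a + A)ᵀ = a - A := by rw [transpose_add, haT, hA, ← sub_eq_add_neg]
  have hUnit' : IsUnit (a + A) := by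
    rw [← hT, Matrix.isUnit_iff_isUnit_det, Matrix.det_transpose,
      ← Matrix.isUnit_iff_isUnit_det]
    exact hUnit
  have hdet : IsUnit (a - A).det := (Matrix.isUnit_iff_isUnit_det _).mp hUnit
  have hdet' : IsUnit (a + A).det := (Matrix.isUnit_iff_isUnit_det _).mp hUnit'
  have hinvT : ((a - A)⁻¹)ᵀ = (a + A)⁻¹ := by rw [Matrix.transpose_nonsing_inv, hT]
  have hinvT' : ((a + A)⁻¹)ᵀ = (a - A)⁻¹ := by rw [Matrix.transpose_nonsing_inv, hT']
  have e1 : (a - A)⁻¹ * (a + A) * (a + A)⁻¹ = (a - A)⁻¹ := by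
    rw [Matrix.mul_assoc, Matrix.mul_nonsing_inv _ hdet', Matrix.mul_one]
  have e2 : (a - A)⁻¹ * (a - A) * (a + A)⁻¹ = (a + A)⁻¹ := by
    rw [Matrix.nonsing_inv_mul _ hdet, Matrix.one_mul]
  have hkey : (a - A)⁻¹ + (a + A)⁻¹ = (a - A)⁻¹ * (a + a) * (a + A)⁻¹ := by
    have h2a : (a + a : Matrix (Fin d) (Fin d) ℝ) = (a + A) + (a - A) := by abel
    rw [h2a, Matrix.mul_add, Matrix.add_mul, e1, e2]
  have hBinj : Function.Injective ((a + A)⁻¹ * V).mulVec := by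
    intro x y hxy
    apply hV
    have hinj : Function.Injective ((a + A)⁻¹).mulVec :=
      Matrix.mulVec_injective_iff_isUnit.mpr (Matrix.isUnit_nonsing_inv_iff.mpr hUnit')
    apply hinj
    simpa [← mulVec_mulVec] using hxy
  have hBform : Vᵀ * (a - A)⁻¹ * a * (a + A)⁻¹ * V
      = ((a + A)⁻¹ * V)ᵀ * a * ((a + A)⁻¹ * V) := by
    rw [transpose_mul, hinvT']
    simp only [Matrix.mul_assoc]
  have hPD : (Vᵀ * (a - A)⁻¹ * a * (a + A)⁻¹ * V).PosDef := by
    rw [hBform]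
    exact sandwich_posDef ha hBinj
  have hsym : (1 / 2 : ℝ) • (Vᵀ * (a - A)⁻¹ * V + (Vᵀ * (a - A)⁻¹ * V)ᵀ)
      = Vᵀ * (a - A)⁻¹ * a * (a + A)⁻¹ * V := by
    have hTr : (Vᵀ * (a - A)⁻¹ * V)ᵀ = Vᵀ * (a + A)⁻¹ * V := by
      rw [transpose_mul, transpose_mul, transpose_transpose, hinvT, Matrix.mul_assoc]
    have hsum : Vᵀ * (a - A)⁻¹ * V + Vᵀ * (a + A)⁻¹ * V
        = Vᵀ * ((a - A)⁻¹ + (a + A)⁻¹) * V := by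
      rw [Matrix.mul_add, Matrix.add_mul]
    have hXX : Vᵀ * ((a - A)⁻¹ * (a + a) * (a + A)⁻¹) * V
        = Vᵀ * (a - A)⁻¹ * a * (a + A)⁻¹ * V + Vᵀ * (a - A)⁻¹ * a * (a + A)⁻¹ * V := by
      simp only [Matrix.mul_add, Matrix.add_mul, Matrix.mul_assoc]
    rw [hTr, hsum, hkey, hXX, smul_add, ← add_smul]
    norm_num
  have hPiInj : Function.Injective (Vᵀ * (a - A)⁻¹ * V).mulVec := by
    have hkerPi : ∀ x : Fin m → ℝ, (Vᵀ * (a - A)⁻¹ * V) *ᵥ x = 0 → x = 0 := by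
      intro x hx
      by_contra h
      have hpos := hPD.dotProduct_mulVec_pos h
      rw [star_trivial, ← hsym] at hpos
      have hxPi : x ⬝ᵥ ((Vᵀ * (a - A)⁻¹ * V) *ᵥ x) = 0 := by
        rw [hx, dotProduct_zero]
      have hxPiT : x ⬝ᵥ ((Vᵀ * (a - A)⁻¹ * V)ᵀ *ᵥ x) = 0 := by
        rw [dotProduct_mulVec, vecMul_transpose, dotProduct_comm, hxPi]
      rw [smul_mulVec, dotProduct_smul, add_mulVec, dotProduct_add,
        hxPi, hxPiT, add_zero, smul_zero] at hpos
      exact lt_irrefl 0 hpos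
    intro x y hxy
    have h0 : (Vᵀ * (a - A)⁻¹ * V) *ᵥ (x - y) = 0 := by rw [mulVec_sub, hxy, sub_self]
    exact sub_eq_zero.mp (hkerPi _ h0)
  exact ⟨Matrix.mulVec_injective_iff_isUnit.mp hPiInj, hsym, hPD⟩
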